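/- Let f : ℝⁿ → ℝ be C¹-smooth and q ∈ ℝ be such that T_q(f) = max{q, f} is convex. Then ∇f restricted to f⁻¹([q, +∞)) is monotone: ⟨∇f(x₁) - ∇f(x₂), x₁ - x₂⟩ ≥ 0 for all x₁, x₂ with f(x₁), f(x₂) ≥ q. Moreover ⟨∇f(x), x - y⟩ ≥ 0 whenever f(x) ≥ q and f(y) < q. -/

import Mathlib

open RealInnerProductSpace

/-- If `f` is `C¹` and `T_q(f) = max {q, f}` is convex, then `∇f` is monotone
on `f⁻¹([q, +∞))`, and `⟨∇f x, x - y⟩ ≥ 0` whenever `f x ≥ q` and `f y < q`. -/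
theorem stmt_13 (n : ℕ) (f : EuclideanSpace ℝ (Fin n) → ℝ) (q : ℝ)
    (hf : ContDiff ℝ 1 f)
    (hconv : ConvexOn ℝ Set.univ (fun x => max q (f x))) :
    (∀ x₁ x₂, q ≤ f x₁ → q ≤ f x₂ →
      0 ≤ ⟪gradient f x₁ - gradient f x₂, x₁ - x₂⟫) ∧
    (∀ x y, q ≤ f x → f y < q → 0 ≤ ⟪gradient f x, x - y⟫) := by
  have hdiff : Differentiable ℝ f := hf.differentiable one_ne_zero
  set T : EuclideanSpace ℝ (Fin n) → ℝ := fun x => max q (f x) with hT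
  have key : ∀ x y, q ≤ f x → f x + ⟪gradient f x, y - x⟫ ≤ T y := by
    intro x y hx
    set v := y - x with hv
    have hTx : T x = f x := max_eq_right hx
    have hc : HasDerivAt (fun t : ℝ => x + t • v) v 0 := by
      simpa using ((hasDerivAt_id (0:ℝ)).smul_const v).const_add x
    have hgrad : HasGradientAt f (gradient f x) x := (hdiff x).hasGradientAt
    have hfd : HasFDerivAt f ((InnerProductSpace.toDual ℝ _) (gradient f x)) x :=
      hgrad.hasFDerivAt
    have hderiv : HasDerivAt (fun t : ℝ => f (x + t • v)) ⟪gradient f x, v⟫ 0 := by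
      have h0 : HasFDerivAt f ((InnerProductSpace.toDual ℝ _) (gradient f x))
          ((fun t : ℝ => x + t • v) 0) := by simpa using hfd
      have := h0.comp_hasDerivAt 0 hc
      rw [InnerProductSpace.toDual_apply_apply] at this
      exact this
    have hslope : Filter.Tendsto (slope (fun t : ℝ => f (x + t • v)) 0)
        (nhdsWithin 0 (Set.Ioi 0)) (nhds ⟪gradient f x, v⟫) :=
      (hasDerivAt_iff_tendsto_slope.mp hderiv).mono_left
        (nhdsWithin_mono _ (fun t ht => ne_of_gt ht))
    have hbound : ∀ᶠ t in nhdsWithin (0:ℝ) (Set.Ioi 0),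
        slope (fun t : ℝ => f (x + t • v)) 0 t ≤ T y - T x := by
      filter_upwards [Ioc_mem_nhdsGT_of_mem (Set.left_mem_Ico.mpr one_pos)] with t ht
      obtain ⟨ht0, ht1⟩ := ht
      have hcomb : x + t • v = (1 - t) • x + t • y := by
        simp only [hv]; module
      have hconvineq : T (x + t • v) ≤ (1 - t) * T x + t * T y := by
        rw [hcomb]
        exact hconv.2 (Set.mem_univ x) (Set.mem_univ y)
          (by linarith) ht0.le (by ring)
      have hfle : f (x + t • v) ≤ T (x + t • v) := le_max_right _ _
      have : f (x + t • v) - f x ≤ t * (T y - T x) := by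
        rw [← hTx]; nlinarith
      rw [slope_def_field]
      simp only [sub_zero, zero_smul, add_zero]
      rw [div_le_iff₀ ht0]
      linarith [this]
    have hlim : ⟪gradient f x, v⟫ ≤ T y - T x :=
      le_of_tendsto hslope hbound
    rw [hTx] at hlim
    linarith
  constructor
  · intro x₁ x₂ h₁ h₂
    have k1 := key x₁ x₂ h₁
    have k2 := key x₂ x₁ h₂
    rw [show T x₂ = f x₂ from max_eq_right h₂] at k1
    rw [show T x₁ = f x₁ from max_eq_right h₁] at k2
    have e1 : ⟪gradient f x₁, x₂ - x₁⟫ = -⟪gradient f x₁, x₁ - x₂⟫ := by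
      rw [show x₂ - x₁ = -(x₁ - x₂) by abel, inner_neg_right]
    rw [inner_sub_left]
    rw [e1] at k1
    linarith
  · intro x y hx hy
    have k := key x y hx
    rw [show T y = q from max_eq_left hy.le] at k
    have e1 : ⟪gradient f x, y - x⟫ = -⟪gradient f x, x - y⟫ := by
      rw [show y - x = -(x - y) by abel, inner_neg_right]
    rw [e1] at k
    linarith
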